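/- arXiv:1411.3791 — 4 statements merged into one kernel-verified Lean document; each statement's English description precedes it below -/
import Mathlib

section
/- Under CCS name-based (unlocated) communication input extension fails: the composition [a] || [τ;ā;b] || [τ;b̄] is a correct composition, while the composition [a+b] || [τ;ā;b] || [τ;b̄] is not a correct composition (the leftmost contract can capture the output b̄ intended for the middle contract). Hence, with unlocated outputs, a+b is not a subcontract of a. -/
/-!
Behavioural contracts with CCS name-based (unlocated) communication, following
Bravetti–Zavattaro.  Outputs `ā` are not directed to any role and synchronize
with an input `a` of any other component.
-/

/-- Action names. -/
abbrev AName := ℕ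

/-- Contracts with unlocated outputs. -/
inductive UOrc : Type
  | zero : UOrc
  | one : UOrc
  | tau : UOrc
  | inp : AName → UOrc        -- input a
  | out : AName → UOrc        -- output ā (unlocated)
  | seq : UOrc → UOrc → UOrc
  | choice : UOrc → UOrc → UOrc
  | par : UOrc → UOrc → UOrc
  | star : UOrc → UOrc
  deriving DecidableEq

/-- Labels of the contract semantics. -/
inductive ULabel : Type
  | tau : ULabel
  | inp : AName → ULabel
  | out : AName → ULabel
  | tick : ULabel
  deriving DecidableEq

/-- Operational semantics of contracts. -/
inductive UStep : UOrc → ULabel → UOrc → Prop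
  | one : UStep .one .tick .zero
  | tau : UStep .tau .tau .one
  | inp : UStep (.inp a) (.inp a) .one
  | out : UStep (.out a) (.out a) .one
  | choiceL : UStep C μ C' → UStep (.choice C D) μ C'
  | choiceR : UStep D μ D' → UStep (.choice C D) μ D'
  | seqL : UStep C μ C' → μ ≠ .tick → UStep (.seq C D) μ (.seq C' D)
  | seqTick : UStep C .tick C' → UStep D μ D' → UStep (.seq C D) μ D'
  | parL : UStep C μ C' → μ ≠ .tick → UStep (.par C D) μ (.par C' D)
  | parR : UStep D μ D' → μ ≠ .tick → UStep (.par C D) μ (.par C D')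
  | parTick : UStep C .tick C' → UStep D .tick D' → UStep (.par C D) .tick (.par C' D')
  | starTick : UStep (.star C) .tick .zero
  | starStep : UStep C μ C' → μ ≠ .tick → UStep (.star C) μ (.seq C' (.star C))

/-- Systems: parallel compositions of contracts `[C₁] || … || [Cₙ]`. -/
inductive USys : Type
  | atom : UOrc → USys
  | par : USys → USys → USys
  deriving DecidableEq

/-- System semantics: CCS-style name-based communication, the synchronization
of an output `ā` with an input `a` of another component is internal (`τ`);
`√` synchronizes globally. -/
inductive USStep : USys → ULabel → USys → Prop
  | atom : UStep C μ C' → USStep (.atom C) μ (.atom C')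
  | parL : USStep P μ P' → μ ≠ .tick → USStep (.par P Q) μ (.par P' Q)
  | parR : USStep Q μ Q' → μ ≠ .tick → USStep (.par P Q) μ (.par P Q')
  | syncLR : USStep P (.out a) P' → USStep Q (.inp a) Q' →
      USStep (.par P Q) .tau (.par P' Q')
  | syncRL : USStep P (.inp a) P' → USStep Q (.out a) Q' →
      USStep (.par P Q) .tau (.par P' Q')
  | parTick : USStep P .tick P' → USStep Q .tick Q' → USStep (.par P Q) .tick (.par P' Q')

/-- Reachability through internal (`τ`, including synchronizations) steps. -/
inductive UReach : USys → USys → Prop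
  | refl (P) : UReach P P
  | step : USStep P .tau P' → UReach P' P'' → UReach P P''

/-- `P` can perform `√`. -/
def UCanTick (P : USys) : Prop := ∃ P', USStep P .tick P'

/-- Correct composition `P↓`: every reachable state can reach a state able to
perform `√`. -/
def UCorrect (P : USys) : Prop :=
  ∀ P', UReach P P' → ∃ P'', UReach P' P'' ∧ UCanTick P''

/-- Subcontract relation for unlocated communication: `C'` is a subcontract of
`C` iff for every composition `P` of contracts, `([C] || P)↓` implies
`([C'] || P)↓`. -/
def USubcontract (C' C : UOrc) : Prop :=
  ∀ P : USys, UCorrect (.par (.atom C) P) → UCorrect (.par (.atom C') P)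

/-- `τ;ā;b` -/
def mid (a b : AName) : UOrc := .seq .tau (.seq (.out a) (.inp b))

/-- `τ;b̄` -/
def rgt (b : AName) : UOrc := .seq .tau (.out b)

section Aux

/-- Three-component system. -/
def sys3 (l m r : UOrc) : USys := .par (.atom l) (.par (.atom m) (.atom r))

@[simp] lemma istep_zero_iff {μ C'} : UStep .zero μ C' ↔ False := by
  constructor <;> intro h <;> cases h

@[simp] lemma istep_one_iff {μ C'} : UStep .one μ C' ↔ (μ = .tick ∧ C' = .zero) := by
  constructor
  · intro h; cases h; exact ⟨rfl, rfl⟩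
  · rintro ⟨rfl, rfl⟩; exact .one

@[simp] lemma istep_tau_iff {μ C'} : UStep .tau μ C' ↔ (μ = .tau ∧ C' = .one) := by
  constructor
  · intro h; cases h; exact ⟨rfl, rfl⟩
  · rintro ⟨rfl, rfl⟩; exact .tau

@[simp] lemma istep_inp_iff {n μ C'} : UStep (.inp n) μ C' ↔ (μ = .inp n ∧ C' = .one) := by
  constructor
  · intro h; cases h; exact ⟨rfl, rfl⟩
  · rintro ⟨rfl, rfl⟩; exact .inp

@[simp] lemma istep_out_iff {n μ C'} : UStep (.out n) μ C' ↔ (μ = .out n ∧ C' = .one) := by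
  constructor
  · intro h; cases h; exact ⟨rfl, rfl⟩
  · rintro ⟨rfl, rfl⟩; exact .out

@[simp] lemma istep_choice_iff {C D μ C'} :
    UStep (.choice C D) μ C' ↔ (UStep C μ C' ∨ UStep D μ C') := by
  constructor
  · intro h; cases h with
    | choiceL h => exact .inl h
    | choiceR h => exact .inr h
  · rintro (h | h)
    · exact .choiceL h
    · exact .choiceR h

@[simp] lemma istep_seqTau_iff {C μ C'} :
    UStep (.seq .tau C) μ C' ↔ (μ = .tau ∧ C' = .seq .one C) := by
  constructor
  · intro h; cases h with
    | seqL h _ => cases h; exact ⟨rfl, rfl⟩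
    | seqTick h _ => cases h
  · rintro ⟨rfl, rfl⟩; exact .seqL .tau (by simp)

@[simp] lemma istep_M1_iff {a b μ C'} :
    UStep (.seq .one (.seq (.out a) (.inp b))) μ C' ↔
      (μ = .out a ∧ C' = .seq .one (.inp b)) := by
  constructor
  · intro h; cases h with
    | seqL h hne => cases h; exact absurd rfl hne
    | seqTick h1 h2 =>
      cases h2 with
      | seqL h _ => cases h; exact ⟨rfl, rfl⟩
      | seqTick h _ => cases h
  · rintro ⟨rfl, rfl⟩; exact .seqTick .one (.seqL .out (by simp))

@[simp] lemma istep_M2_iff {b μ C'} :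
    UStep (.seq .one (.inp b)) μ C' ↔ (μ = .inp b ∧ C' = .one) := by
  constructor
  · intro h; cases h with
    | seqL h hne => cases h; exact absurd rfl hne
    | seqTick h1 h2 => cases h2; exact ⟨rfl, rfl⟩
  · rintro ⟨rfl, rfl⟩; exact .seqTick .one .inp

@[simp] lemma istep_R1_iff {b μ C'} :
    UStep (.seq .one (.out b)) μ C' ↔ (μ = .out b ∧ C' = .one) := by
  constructor
  · intro h; cases h with
    | seqL h hne => cases h; exact absurd rfl hne
    | seqTick h1 h2 => cases h2; exact ⟨rfl, rfl⟩
  · rintro ⟨rfl, rfl⟩; exact .seqTick .one .out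

lemma sstep_atom_inv {C μ P'} (h : USStep (.atom C) μ P') :
    ∃ C', P' = .atom C' ∧ UStep C μ C' := by
  cases h with
  | atom h => exact ⟨_, rfl, h⟩

/-- Full inversion for steps of a three-component system. -/
lemma sstep_sys3_inv {l m r μ P'} (h : USStep (sys3 l m r) μ P') :
    (∃ l', UStep l μ l' ∧ μ ≠ .tick ∧ P' = sys3 l' m r) ∨
    (∃ m', UStep m μ m' ∧ μ ≠ .tick ∧ P' = sys3 l m' r) ∨
    (∃ r', UStep r μ r' ∧ μ ≠ .tick ∧ P' = sys3 l m r') ∨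
    (∃ n l' m', μ = .tau ∧ UStep l (.out n) l' ∧ UStep m (.inp n) m' ∧ P' = sys3 l' m' r) ∨
    (∃ n l' r', μ = .tau ∧ UStep l (.out n) l' ∧ UStep r (.inp n) r' ∧ P' = sys3 l' m r') ∨
    (∃ n l' m', μ = .tau ∧ UStep l (.inp n) l' ∧ UStep m (.out n) m' ∧ P' = sys3 l' m' r) ∨
    (∃ n l' r', μ = .tau ∧ UStep l (.inp n) l' ∧ UStep r (.out n) r' ∧ P' = sys3 l' m r') ∨
    (∃ n m' r', μ = .tau ∧ UStep m (.out n) m' ∧ UStep r (.inp n) r' ∧ P' = sys3 l m' r') ∨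
    (∃ n m' r', μ = .tau ∧ UStep m (.inp n) m' ∧ UStep r (.out n) r' ∧ P' = sys3 l m' r') ∨
    (∃ l' m' r', μ = .tick ∧ UStep l .tick l' ∧ UStep m .tick m' ∧ UStep r .tick r' ∧
      P' = sys3 l' m' r') := by
  cases h with
  | parL h hne =>
    obtain ⟨l', rfl, hl⟩ := sstep_atom_inv h
    exact .inl ⟨l', hl, hne, rfl⟩
  | parR h hne =>
    cases h with
    | parL h2 _ =>
      obtain ⟨m', rfl, hm⟩ := sstep_atom_inv h2
      exact .inr (.inl ⟨m', hm, hne, rfl⟩)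
    | parR h2 _ =>
      obtain ⟨r', rfl, hr⟩ := sstep_atom_inv h2
      exact .inr (.inr (.inl ⟨r', hr, hne, rfl⟩))
    | syncLR h2 h3 =>
      obtain ⟨m', rfl, hm⟩ := sstep_atom_inv h2
      obtain ⟨r', rfl, hr⟩ := sstep_atom_inv h3
      exact .inr (.inr (.inr (.inr (.inr (.inr (.inr (.inl ⟨_, m', r', rfl, hm, hr, rfl⟩)))))))
    | syncRL h2 h3 =>
      obtain ⟨m', rfl, hm⟩ := sstep_atom_inv h2
      obtain ⟨r', rfl, hr⟩ := sstep_atom_inv h3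
      exact .inr (.inr (.inr (.inr (.inr (.inr (.inr (.inr (.inl ⟨_, m', r', rfl, hm, hr, rfl⟩))))))))
    | parTick h2 h3 => exact absurd rfl hne
  | syncLR h1 h2 =>
    obtain ⟨l', rfl, hl⟩ := sstep_atom_inv h1
    cases h2 with
    | parL h3 _ =>
      obtain ⟨m', rfl, hm⟩ := sstep_atom_inv h3
      exact .inr (.inr (.inr (.inl ⟨_, l', m', rfl, hl, hm, rfl⟩)))
    | parR h3 _ =>
      obtain ⟨r', rfl, hr⟩ := sstep_atom_inv h3
      exact .inr (.inr (.inr (.inr (.inl ⟨_, l', r', rfl, hl, hr, rfl⟩))))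
  | syncRL h1 h2 =>
    obtain ⟨l', rfl, hl⟩ := sstep_atom_inv h1
    cases h2 with
    | parL h3 _ =>
      obtain ⟨m', rfl, hm⟩ := sstep_atom_inv h3
      exact .inr (.inr (.inr (.inr (.inr (.inl ⟨_, l', m', rfl, hl, hm, rfl⟩)))))
    | parR h3 _ =>
      obtain ⟨r', rfl, hr⟩ := sstep_atom_inv h3
      exact .inr (.inr (.inr (.inr (.inr (.inr (.inl ⟨_, l', r', rfl, hl, hr, rfl⟩))))))
  | parTick h1 h2 =>
    obtain ⟨l', rfl, hl⟩ := sstep_atom_inv h1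
    cases h2 with
    | parTick h3 h4 =>
      obtain ⟨m', rfl, hm⟩ := sstep_atom_inv h3
      obtain ⟨r', rfl, hr⟩ := sstep_atom_inv h4
      exact .inr (.inr (.inr (.inr (.inr (.inr (.inr (.inr (.inr ⟨l', m', r', rfl, hl, hm, hr, rfl⟩))))))))
    | parL _ hne => exact absurd rfl hne
    | parR _ hne => exact absurd rfl hne
end Aux


section Main

/-- Transitivity of internal reachability. -/
lemma UReach.trans {P Q R : USys} (h1 : UReach P Q) (h2 : UReach Q R) : UReach P R := by
  induction h1 with
  | refl => exact h2
  | step hs _ ih => exact .step hs (ih h2)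

/-- Invariant: the τ-reachable states of `[a] || [τ;ā;b] || [τ;b̄]`. -/
def InvS (a b : AName) (P : USys) : Prop :=
  P = sys3 (.inp a) (mid a b) (rgt b) ∨
  P = sys3 (.inp a) (.seq .one (.seq (.out a) (.inp b))) (rgt b) ∨
  P = sys3 (.inp a) (mid a b) (.seq .one (.out b)) ∨
  P = sys3 (.inp a) (.seq .one (.seq (.out a) (.inp b))) (.seq .one (.out b)) ∨
  P = sys3 .one (.seq .one (.inp b)) (rgt b) ∨
  P = sys3 .one (.seq .one (.inp b)) (.seq .one (.out b)) ∨
  P = sys3 .one .one .one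

lemma InvS_closed {a b : AName} (hab : a ≠ b) {P P' : USys}
    (hI : InvS a b P) (h : USStep P .tau P') : InvS a b P' := by
  unfold InvS at hI ⊢
  rcases hI with rfl | rfl | rfl | rfl | rfl | rfl | rfl <;>
    rcases sstep_sys3_inv h with
        ⟨l', hl, hne, rfl⟩ | ⟨m', hm, hne, rfl⟩ | ⟨r', hr, hne, rfl⟩ |
        ⟨n, l', m', heq, hl, hm, rfl⟩ | ⟨n, l', r', heq, hl, hr, rfl⟩ |
        ⟨n, l', m', heq, hl, hm, rfl⟩ | ⟨n, l', r', heq, hl, hr, rfl⟩ |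
        ⟨n, m', r', heq, hm, hr, rfl⟩ | ⟨n, m', r', heq, hm, hr, rfl⟩ |
        ⟨l', m', r', heq, hl, hm, hr, rfl⟩ <;>
    simp_all [sys3, mid, rgt]

lemma InvS_reach {a b : AName} (hab : a ≠ b) {P P' : USys}
    (hr : UReach P P') (hI : InvS a b P) : InvS a b P' := by
  induction hr with
  | refl => exact hI
  | step hs _ ih => exact ih (InvS_closed hab hI hs)

lemma ne_tick_tau : (ULabel.tau : ULabel) ≠ .tick := by simp

/-- Every invariant state reaches the all-done state. -/
lemma InvS_reaches_done {a b : AName} {P : USys} (hI : InvS a b P) :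
    UReach P (sys3 .one .one .one) := by
  have sM : ∀ l r, USStep (sys3 l (mid a b) r) .tau
      (sys3 l (.seq .one (.seq (.out a) (.inp b))) r) := fun l r =>
    .parR (.parL (.atom (by simp [mid])) ne_tick_tau) ne_tick_tau
  have sR : ∀ l m, USStep (sys3 l m (rgt b)) .tau (sys3 l m (.seq .one (.out b))) :=
    fun l m => .parR (.parR (.atom (by simp [rgt])) ne_tick_tau) ne_tick_tau
  have sA : ∀ r, USStep (sys3 (.inp a) (.seq .one (.seq (.out a) (.inp b))) r) .tau
      (sys3 .one (.seq .one (.inp b)) r) := fun r =>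
    .syncRL (a := a) (.atom (by simp)) (.parL (.atom (by simp)) (by simp))
  have sB : ∀ l, USStep (sys3 l (.seq .one (.inp b)) (.seq .one (.out b))) .tau
      (sys3 l .one .one) := fun l =>
    .parR (.syncRL (a := b) (.atom (by simp)) (.atom (by simp))) ne_tick_tau
  rcases hI with rfl | rfl | rfl | rfl | rfl | rfl | rfl
  · exact .step (sM _ _) (.step (sA _) (.step (sR _ _) (.step (sB _) (.refl _))))
  · exact .step (sA _) (.step (sR _ _) (.step (sB _) (.refl _)))
  · exact .step (sM _ _) (.step (sA _) (.step (sB _) (.refl _)))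
  · exact .step (sA _) (.step (sB _) (.refl _))
  · exact .step (sR _ _) (.step (sB _) (.refl _))
  · exact .step (sB _) (.refl _)
  · exact .refl _

lemma done_can_tick : UCanTick (sys3 .one .one .one) :=
  ⟨sys3 .zero .zero .zero,
    .parTick (.atom (by simp)) (.parTick (.atom (by simp)) (.atom (by simp)))⟩

/-- The stuck state of the incorrect composition. -/
lemma stuck_no_tau {a b : AName} {Q : USys}
    (h : USStep (sys3 .one (.seq .one (.seq (.out a) (.inp b))) .one) .tau Q) : False := by
  rcases sstep_sys3_inv h with
      ⟨l', hl, hne, rfl⟩ | ⟨m', hm, hne, rfl⟩ | ⟨r', hr, hne, rfl⟩ |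
      ⟨n, l', m', heq, hl, hm, rfl⟩ | ⟨n, l', r', heq, hl, hr, rfl⟩ |
      ⟨n, l', m', heq, hl, hm, rfl⟩ | ⟨n, l', r', heq, hl, hr, rfl⟩ |
      ⟨n, m', r', heq, hm, hr, rfl⟩ | ⟨n, m', r', heq, hm, hr, rfl⟩ |
      ⟨l', m', r', heq, hl, hm, hr, rfl⟩ <;>
    simp_all

lemma stuck_no_tick {a b : AName} {Q : USys}
    (h : USStep (sys3 .one (.seq .one (.seq (.out a) (.inp b))) .one) .tick Q) : False := by
  rcases sstep_sys3_inv h with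
      ⟨l', hl, hne, rfl⟩ | ⟨m', hm, hne, rfl⟩ | ⟨r', hr, hne, rfl⟩ |
      ⟨n, l', m', heq, hl, hm, rfl⟩ | ⟨n, l', r', heq, hl, hr, rfl⟩ |
      ⟨n, l', m', heq, hl, hm, rfl⟩ | ⟨n, l', r', heq, hl, hr, rfl⟩ |
      ⟨n, m', r', heq, hm, hr, rfl⟩ | ⟨n, m', r', heq, hm, hr, rfl⟩ |
      ⟨l', m', r', heq, hl, hm, hr, rfl⟩ <;>
    simp_all

end Main

/-- Under CCS name-based (unlocated) communication input
extension fails: `[a] || [τ;ā;b] || [τ;b̄]` is a correct composition, while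
`[a+b] || [τ;ā;b] || [τ;b̄]` is not (the leftmost contract can capture the
output `b̄` intended for the middle contract); hence `a+b` is not a
subcontract of `a`. -/
theorem input_extension_fails_with_unlocated_communication
    (a b : AName) (hab : a ≠ b) :
    UCorrect (.par (.atom (.inp a)) (.par (.atom (mid a b)) (.atom (rgt b)))) ∧
    ¬ UCorrect (.par (.atom (.choice (.inp a) (.inp b)))
        (.par (.atom (mid a b)) (.atom (rgt b)))) ∧
    ¬ USubcontract (.choice (.inp a) (.inp b)) (.inp a) := by
  have h1 : UCorrect (sys3 (.inp a) (mid a b) (rgt b)) := by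
    intro P' hr
    exact ⟨sys3 .one .one .one,
      InvS_reaches_done (InvS_reach hab hr (Or.inl rfl)), done_can_tick⟩
  have h2 : ¬ UCorrect (sys3 (.choice (.inp a) (.inp b)) (mid a b) (rgt b)) := by
    intro hC
    -- reach the stuck state
    have hreach : UReach (sys3 (.choice (.inp a) (.inp b)) (mid a b) (rgt b))
        (sys3 .one (.seq .one (.seq (.out a) (.inp b))) .one) := by
      refine .step (.parR (.parR (.atom (show UStep (rgt b) .tau (.seq .one (.out b)) by
        simp [rgt])) ne_tick_tau) ne_tick_tau) ?_
      refine .step (.syncRL (a := b) (.atom (.choiceR .inp))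
        (.parR (.atom (show UStep (.seq .one (.out b)) (.out b) .one by simp)) (by simp))) ?_
      exact .step (.parR (.parL (.atom (by simp [mid])) ne_tick_tau) ne_tick_tau) (.refl _)
    obtain ⟨P'', hr'', hP''⟩ := hC _ hreach
    have hstuck : P'' = sys3 .one (.seq .one (.seq (.out a) (.inp b))) .one := by
      cases hr'' with
      | refl => rfl
      | step hs _ => exact absurd hs (fun h => stuck_no_tau (a := a) (b := b) h)
    subst hstuck
    obtain ⟨Q, hQ⟩ := hP''
    exact stuck_no_tick (a := a) (b := b) hQ
  exact ⟨h1, h2, fun hsub => h2 (hsub (.par (.atom (mid a b)) (.atom (rgt b))) h1)⟩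
end

section
/- The converse of the soundness theorem for the should-testing characterization fails: there exist output persistent contracts C and C' with C' ⪯ C but NOT NF(C' \\ (I(C') − I(C))) ⪯_test NF(C). In particular the uncontrollable contracts C = 0 and C' = a;b;0 satisfy a;b;0 ⪯ 0 and 0 ⪯ a;b;0, yet they are not related by the should-testing preorder (after restriction and normal form). Hence the subcontract relation ⪯ is strictly coarser than should-testing. -/
/-- Roles. -/
abbrev Role := ℕ

/-! ### The choreography calculus -/

/-- Choreographies, including the auxiliary terms `one` (successful completion)
and `zero` (halt). -/
inductive Chor : Type
  | comm : AName → Role → Role → Chor      -- a_{r→s}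
  | choice : Chor → Chor → Chor
  | seq : Chor → Chor → Chor
  | par : Chor → Chor → Chor
  | star : Chor → Chor
  | one : Chor
  | zero : Chor
  deriving DecidableEq

/-- Labels of the choreography semantics: interactions `a_{r→s}` and `√`. -/
inductive CLabel : Type
  | comm : AName → Role → Role → CLabel
  | tick : CLabel
  deriving DecidableEq

/-- Operational semantics of choreographies. -/
inductive CStep : Chor → CLabel → Chor → Prop
  | comm : CStep (.comm a r s) (.comm a r s) .one
  | one : CStep .one .tick .zero
  | starTick : CStep (.star H) .tick .zero
  | choiceL : CStep H η H' → CStep (.choice H L) η H'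
  | choiceR : CStep L η L' → CStep (.choice H L) η L'
  | seqL : CStep H η H' → η ≠ .tick → CStep (.seq H L) η (.seq H' L)
  | seqTick : CStep H .tick H' → CStep L η L' → CStep (.seq H L) η L'
  | parL : CStep H η H' → η ≠ .tick → CStep (.par H L) η (.par H' L)
  | parR : CStep L η L' → η ≠ .tick → CStep (.par H L) η (.par H L')
  | parTick : CStep H .tick H' → CStep L .tick L' → CStep (.par H L) .tick (.par H' L')
  | starStep : CStep H η H' → η ≠ .tick → CStep (.star H) η (.seq H' (.star H))

/-- Roles syntactically occurring in a choreography. -/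
def rolesC : Chor → Finset Role
  | .comm _ r s => {r, s}
  | .choice H L | .seq H L | .par H L => rolesC H ∪ rolesC L
  | .star H => rolesC H
  | .one | .zero => ∅

/-- Action names syntactically occurring in a choreography. -/
def namesC : Chor → Finset AName
  | .comm a _ _ => {a}
  | .choice H L | .seq H L | .par H L => namesC H ∪ namesC L
  | .star H => namesC H
  | .one | .zero => ∅

/-! ### The orchestration calculus -/

/-- Orchestrations (also used as behavioural contract terms). -/
inductive Orc : Type
  | zero : Orc
  | one : Orc
  | tau : Orc
  | inp : AName → Orc              -- receive a
  | out : AName → Role → Orc       -- invoke ā directed to role l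
  | seq : Orc → Orc → Orc
  | choice : Orc → Orc → Orc
  | par : Orc → Orc → Orc
  | star : Orc → Orc
  deriving DecidableEq

/-- Labels of the orchestration/contract semantics. -/
inductive OLabel : Type
  | tau : OLabel
  | inp : AName → OLabel
  | out : AName → Role → OLabel
  | tick : OLabel
  deriving DecidableEq

/-- Operational semantics of orchestrations/contracts. -/
inductive OStep : Orc → OLabel → Orc → Prop
  | one : OStep .one .tick .zero
  | tau : OStep .tau .tau .one
  | inp : OStep (.inp a) (.inp a) .one
  | out : OStep (.out a l) (.out a l) .one
  | choiceL : OStep C μ C' → OStep (.choice C D) μ C'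
  | choiceR : OStep D μ D' → OStep (.choice C D) μ D'
  | seqL : OStep C μ C' → μ ≠ .tick → OStep (.seq C D) μ (.seq C' D)
  | seqTick : OStep C .tick C' → OStep D μ D' → OStep (.seq C D) μ D'
  | parL : OStep C μ C' → μ ≠ .tick → OStep (.par C D) μ (.par C' D)
  | parR : OStep D μ D' → μ ≠ .tick → OStep (.par C D) μ (.par C D')
  | parTick : OStep C .tick C' → OStep D .tick D' → OStep (.par C D) .tick (.par C' D')
  | starTick : OStep (.star C) .tick .zero
  | starStep : OStep C μ C' → μ ≠ .tick → OStep (.star C) μ (.seq C' (.star C))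

/-! ### Systems (compositions of located orchestrations/contracts) -/

/-- Systems: parallel compositions of located orchestrations `[C]_l`. -/
inductive Sys : Type
  | atom : Orc → Role → Sys
  | par : Sys → Sys → Sys
  deriving DecidableEq

/-- Labels of the system semantics. -/
inductive SLabel : Type
  | tau : SLabel
  | inp : AName → Role → SLabel            -- a_s
  | out : AName → Role → Role → SLabel     -- ā_{r s}
  | comm : AName → Role → Role → SLabel    -- a_{r→s}
  | tick : SLabel
  deriving DecidableEq

/-- Operational semantics of systems. -/
inductive SStep : Sys → SLabel → Sys → Prop
  | atomTau : OStep C .tau C' → SStep (.atom C r) .tau (.atom C' r)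
  | atomInp : OStep C (.inp a) C' → SStep (.atom C r) (.inp a r) (.atom C' r)
  | atomOut : OStep C (.out a s) C' → SStep (.atom C r) (.out a r s) (.atom C' r)
  | atomTick : OStep C .tick C' → SStep (.atom C r) .tick (.atom C' r)
  | parL : SStep P μ P' → μ ≠ .tick → SStep (.par P Q) μ (.par P' Q)
  | parR : SStep Q μ Q' → μ ≠ .tick → SStep (.par P Q) μ (.par P Q')
  | commLR : SStep P (.out a r s) P' → SStep Q (.inp a s) Q' →
      SStep (.par P Q) (.comm a r s) (.par P' Q')
  | commRL : SStep P (.inp a s) P' → SStep Q (.out a r s) Q' →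
      SStep (.par P Q) (.comm a r s) (.par P' Q')
  | parTick : SStep P .tick P' → SStep Q .tick Q' → SStep (.par P Q) .tick (.par P' Q')

/-- One step of a completely specified system: an internal `τ` step or a
completed interaction `a_{r→s}`. -/
def CompleteStep (P P' : Sys) : Prop :=
  SStep P .tau P' ∨ ∃ a r s, SStep P (.comm a r s) P'

/-- Reachability through complete (τ / completed-interaction) steps. -/
inductive Reach : Sys → Sys → Prop
  | refl (P) : Reach P P
  | step : CompleteStep P P' → Reach P' P'' → Reach P P''

/-- `P` can perform the successful-termination label `√`. -/
def CanTick (P : Sys) : Prop := ∃ P', SStep P .tick P'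

/-- Correct composition `P↓`: every reachable state can reach a state able to
perform `√`. -/
def Correct (P : Sys) : Prop :=
  ∀ P', Reach P P' → ∃ P'', Reach P' P'' ∧ CanTick P''

/-- `WTrace P w` is the weak transition `P ⇒^{w√}`: `P` performs the sequence
`w` of completed interactions `a_{r→s}` (absorbing `τ` steps) and then `√`. -/
inductive WTrace : Sys → List (AName × Role × Role) → Prop
  | tick : CanTick P → WTrace P []
  | tau : SStep P .tau P' → WTrace P' w → WTrace P w
  | comm : SStep P (.comm a r s) P' → WTrace P' w → WTrace P ((a, r, s) :: w)

/-- `CTrace H w` is the transition sequence `H →^{w√}`. -/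
inductive CTrace : Chor → List (AName × Role × Role) → Prop
  | tick : CStep H .tick H' → CTrace H []
  | comm : CStep H (.comm a r s) H' → CTrace H' w → CTrace H ((a, r, s) :: w)

/-- `P` implements `H` (written `P ∝ H`): `P` is a correct composition and all
its conversations (followed by `√`) are admitted by `H`. -/
def Implements (P : Sys) (H : Chor) : Prop :=
  Correct P ∧ ∀ w, WTrace P w → CTrace H w

/-! ### Projection and well-formedness -/

/-- Projection of a choreography on a role (homomorphic over all operators). -/
def proj : Chor → Role → Orc
  | .comm a r s, t => if t = r then .out a s else if t = s then .inp a else .one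
  | .choice H L, t => .choice (proj H t) (proj L t)
  | .seq H L, t => .seq (proj H t) (proj L t)
  | .par H L, t => .par (proj H t) (proj L t)
  | .star H, t => .star (proj H t)
  | .one, _ => .one
  | .zero, _ => .zero

/-- Parallel composition of a list of located contracts
`[C_1]_{l_1} || … || [C_n]_{l_n}`. -/
def composeC : List (Orc × Role) → Sys
  | [] => .atom .one 0
  | [(C, l)] => .atom C l
  | (C, l) :: x :: xs => .par (.atom C l) (composeC (x :: xs))

/-- Well-formed choreography: the system obtained by projecting `H` on all its
roles implements `H` (for any enumeration of its roles). -/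
def WellFormed (H : Chor) : Prop :=
  ∀ L : List Role, L.Nodup → L.toFinset = rolesC H →
    Implements (composeC (L.map fun r => (proj H r, r))) H

/-! ### Behavioural contracts: basic notions -/

/-- Roles targeted by output actions syntactically occurring in a contract. -/
def oroles : Orc → Finset Role
  | .out _ l => {l}
  | .seq C D | .choice C D | .par C D => oroles C ∪ oroles D
  | .star C => oroles C
  | _ => ∅

/-- Input action names syntactically occurring in a contract: `I(C)`. -/
def inames : Orc → Finset AName
  | .inp a => {a}
  | .seq C D | .choice C D | .par C D => inames C ∪ inames D
  | .star C => inames C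
  | _ => ∅

/-- `C \\ M`: replace every input on a name in `M` occurring in `C` by `0`. -/
def restrict (C : Orc) (M : Finset AName) : Orc :=
  match C with
  | .inp a => if a ∈ M then .zero else .inp a
  | .seq C D => .seq (restrict C M) (restrict D M)
  | .choice C D => .choice (restrict C M) (restrict D M)
  | .par C D => .par (restrict C M) (restrict D M)
  | .star C => .star (restrict C M)
  | C => C

/-- Reachability in the contract LTS (through any labels). -/
inductive OReach : Orc → Orc → Prop
  | refl (C) : OReach C C
  | step : OStep C μ C' → OReach C' C'' → OReach C C''

/-- Output persistence: once a contract decides to execute an output, its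
actual execution is mandatory to reach successful termination. -/
def OutputPersistent (C : Orc) : Prop :=
  ∀ C', OReach C C' → ∀ a l, (∃ D, OStep C' (.out a l) D) →
    (¬ ∃ D, OStep C' .tick D) ∧
    (∀ μ C'', OStep C' μ C'' → μ ≠ .out a l → ∃ D, OStep C'' (.out a l) D)

/-- The list of roles of the located contracts occurring in a system. -/
def rolesList : Sys → List Role
  | .atom _ r => [r]
  | .par P Q => rolesList P ++ rolesList Q

/-- No contract sends outputs to its own role. -/
def NoSelfOut : Sys → Prop
  | .atom C r => r ∉ oroles C
  | .par P Q => NoSelfOut P ∧ NoSelfOut Q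

/-- Well-formed system: pairwise distinct roles, no output to one's own role. -/
def WFSys (P : Sys) : Prop := (rolesList P).Nodup ∧ NoSelfOut P

/-- All contracts occurring in the system are output persistent. -/
def AllOP : Sys → Prop
  | .atom C _ => OutputPersistent C
  | .par P Q => AllOP P ∧ AllOP Q

/-- The subcontract relation `C' ⪯ C` (compliance testing): for every fresh
role `l` and every test composition `P` of output persistent contracts not
using `l`, correctness of `[C]_l || P` implies correctness of `[C']_l || P`. -/
def Subcontract (C' C : Orc) : Prop :=
  ∀ l : Role, l ∉ oroles C ∪ oroles C' →
    ∀ P : Sys, AllOP P → WFSys P → l ∉ rolesList P →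
      Correct (.par (.atom C l) P) → Correct (.par (.atom C' l) P)

/-- Independent subcontract pre-order over output persistent contracts:
a pre-order such that refining any number of contracts of a correct system
independently preserves correctness. -/
def IndepSubcontractPre (le : Orc → Orc → Prop) : Prop :=
  (∀ C, OutputPersistent C → le C C) ∧
  (∀ C₁ C₂ C₃, OutputPersistent C₁ → OutputPersistent C₂ → OutputPersistent C₃ →
      le C₁ C₂ → le C₂ C₃ → le C₁ C₃) ∧
  (∀ L : List (Orc × Orc × Role), L ≠ [] →
    (∀ x ∈ L, OutputPersistent x.1 ∧ OutputPersistent x.2.1 ∧ le x.2.1 x.1) →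
    (L.map fun x => x.2.2).Nodup →
    (∀ x ∈ L, x.2.2 ∉ oroles x.1 ∪ oroles x.2.1) →
    Correct (composeC (L.map fun x => (x.1, x.2.2))) →
    Correct (composeC (L.map fun x => (x.2.1, x.2.2))))

/-- An uncontrollable contract: no test composition can lead it to success. -/
def Uncontrollable (C : Orc) : Prop :=
  ¬ ∃ (l : Role) (P : Sys), l ∉ oroles C ∧ AllOP P ∧ WFSys P ∧ l ∉ rolesList P ∧
      Correct (.par (.atom C l) P)

/-- Weak traces of a contract: sequences of visible labels, absorbing `τ`. -/
inductive WOTrace : Orc → List OLabel → Prop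
  | nil (C) : WOTrace C []
  | tau : OStep C .tau C' → WOTrace C' w → WOTrace C w
  | vis : OStep C μ C' → μ ≠ .tau → WOTrace C' w → WOTrace C (μ :: w)

/-! ### Should-testing (fair testing) à la Rensink–Vogler -/

/-- Labels of tests: internal moves, synchronization with a (visible) action of
the tested contract (`√` included as any other action), and test success `√'`. -/
inductive TLab : Type
  | tau : TLab
  | sync : OLabel → TLab
  | succ : TLab

/-- A test: a labelled transition system over `TLab`. -/
structure TestLTS where
  S : Type
  step : S → TLab → S → Prop
  init : S

/-- Steps of a contract/test configuration. -/
inductive TCStep (T : TestLTS) : (Orc × T.S) → (Orc × T.S) → Prop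
  | ctau : OStep C .tau C' → TCStep T (C, t) (C', t)
  | ttau : T.step t .tau t' → TCStep T (C, t) (C, t')
  | sync : OStep C μ C' → μ ≠ OLabel.tau → T.step t (.sync μ) t' → TCStep T (C, t) (C', t')

/-- Reachability of configurations. -/
inductive TCReach (T : TestLTS) : (Orc × T.S) → (Orc × T.S) → Prop
  | refl (c) : TCReach T c c
  | step : TCStep T c c' → TCReach T c' c'' → TCReach T c c''

/-- `C` should-passes `T`: from every reachable configuration a configuration
in which the test can perform the success action is reachable. -/
def Shd (C : Orc) (T : TestLTS) : Prop :=
  ∀ c, TCReach T (C, T.init) c → ∃ c', TCReach T c c' ∧ ∃ t', T.step c'.2 .succ t'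

/-- The should-testing (fair testing) pre-order: `ShouldPre C' C` holds iff
every test that `C` should-passes is also should-passed by `C'`. -/
def ShouldPre (C' C : Orc) : Prop := ∀ T : TestLTS, Shd C T → Shd C' T

/-- The normal form `NF(C)`: the recursive-equations presentation of the LTS of
`C`.  Since contracts are here represented directly by LTS-denoting terms and
the should-testing pre-order only depends on the underlying LTS, the normal
form is the term itself. -/
def NF (C : Orc) : Orc := C

/-- `a;b;0` -/
def inSeq0 (a b : AName) : Orc := .seq (.inp a) (.seq (.inp b) .zero)

/-! ### Auxiliary lemmas -/

lemma oreach_ind {P : Orc → Prop}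
    (hP : ∀ {C μ C'}, OStep C μ C' → P C → P C') :
    ∀ {C C'}, OReach C C' → P C → P C' := by
  intro C C' h
  induction h with
  | refl => exact id
  | step hs _ ih => exact fun h => ih (hP hs h)

lemma tcreach_ind {T : TestLTS} {P : Orc × T.S → Prop}
    (hP : ∀ {c c'}, TCStep T c c' → P c → P c') :
    ∀ {c c'}, TCReach T c c' → P c → P c' := by
  intro c c' h
  induction h with
  | refl => exact id
  | step hs _ ih => exact fun h => ih (hP hs h)

lemma oroles_step : ∀ {C : Orc} {μ : OLabel} {C' : Orc}, OStep C μ C' →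
    oroles C = ∅ → (∀ a l, μ ≠ OLabel.out a l) ∧ oroles C' = ∅ := by
  intro C μ C' h
  induction h with
  | one => exact fun _ => ⟨by simp, rfl⟩
  | tau => exact fun _ => ⟨by simp, rfl⟩
  | inp => exact fun _ => ⟨by simp, rfl⟩
  | out => intro hC; simp [oroles] at hC
  | choiceL _ ih =>
      intro hC; simp only [oroles, Finset.union_eq_empty] at hC
      exact ih hC.1
  | choiceR _ ih =>
      intro hC; simp only [oroles, Finset.union_eq_empty] at hC
      exact ih hC.2
  | seqL _ _ ih =>
      intro hC; simp only [oroles, Finset.union_eq_empty] at hC ⊢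
      exact ⟨(ih hC.1).1, (ih hC.1).2, hC.2⟩
  | seqTick _ _ _ ih =>
      intro hC; simp only [oroles, Finset.union_eq_empty] at hC
      exact ih hC.2
  | parL _ _ ih =>
      intro hC; simp only [oroles, Finset.union_eq_empty] at hC ⊢
      exact ⟨(ih hC.1).1, (ih hC.1).2, hC.2⟩
  | parR _ _ ih =>
      intro hC; simp only [oroles, Finset.union_eq_empty] at hC ⊢
      exact ⟨(ih hC.2).1, hC.1, (ih hC.2).2⟩
  | parTick _ _ ih1 ih2 =>
      intro hC; simp only [oroles, Finset.union_eq_empty] at hC ⊢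
      exact ⟨by simp, (ih1 hC.1).2, (ih2 hC.2).2⟩
  | starTick => exact fun _ => ⟨by simp, rfl⟩
  | starStep _ _ ih =>
      intro hC; simp only [oroles, Finset.union_eq_empty] at hC ⊢
      exact ⟨(ih hC).1, (ih hC).2, hC⟩

lemma op_of_noout {C : Orc} (hC : oroles C = ∅) : OutputPersistent C := by
  intro C' hreach a l hD
  obtain ⟨D, hD⟩ := hD
  have hC' : oroles C' = ∅ :=
    oreach_ind (P := fun X => oroles X = ∅)
      (fun hs h => (oroles_step hs h).2) hreach hC
  exact ((oroles_step hD hC').1 a l rfl).elim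

/-- A contract none of whose reachable states can perform `√`. -/
def Dead (C : Orc) : Prop := ∀ C', OReach C C' → ¬ ∃ D, OStep C' .tick D

lemma dead_zero : Dead .zero := by
  intro C' hreach
  have hC' : C' = .zero :=
    oreach_ind (P := fun X => X = .zero)
      (fun hs h => by subst h; cases hs) hreach rfl
  subst hC'
  rintro ⟨D, hD⟩; cases hD

/-- The invariant describing the reachable states of `a;b;0`. -/
def ReachInv (a b : AName) (C : Orc) : Prop :=
  C = inSeq0 a b ∨ C = .seq .one (.seq (.inp b) .zero) ∨ C = .seq .one .zero

lemma reachInv_step {a b : AName} {C : Orc} {μ : OLabel} {C' : Orc}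
    (h : OStep C μ C') (hI : ReachInv a b C) : ReachInv a b C' := by
  rcases hI with rfl | rfl | rfl
  · cases h with
    | seqL h1 hn => cases h1; exact Or.inr (Or.inl rfl)
    | seqTick h1 h2 => cases h1
  · cases h with
    | seqL h1 hn => cases h1; exact absurd rfl hn
    | seqTick h1 h2 =>
        cases h2 with
        | seqL h3 hn => cases h3; exact Or.inr (Or.inr rfl)
        | seqTick h3 h4 => cases h3
  · cases h with
    | seqL h1 hn => cases h1; exact absurd rfl hn
    | seqTick h1 h2 => cases h2

lemma reachInv_notick {a b : AName} {C : Orc} (hI : ReachInv a b C) :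
    ¬ ∃ D, OStep C .tick D := by
  rintro ⟨D, hD⟩
  rcases hI with rfl | rfl | rfl
  · cases hD with
    | seqL h1 hn => exact hn rfl
    | seqTick h1 h2 => cases h1
  · cases hD with
    | seqL h1 hn => exact hn rfl
    | seqTick h1 h2 =>
        cases h2 with
        | seqL h3 hn => exact hn rfl
        | seqTick h3 h4 => cases h3
  · cases hD with
    | seqL h1 hn => exact hn rfl
    | seqTick h1 h2 => cases h2

lemma dead_inSeq0 (a b : AName) : Dead (inSeq0 a b) := by
  intro C' hreach
  exact reachInv_notick
    (oreach_ind (P := ReachInv a b) (fun hs h => reachInv_step hs h)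
      hreach (Or.inl rfl))

/-- Reachability from `[C]_l || P` keeps the shape, the left contract
evolving along its own LTS. -/
lemma reach_par_inv {l : Role} :
    ∀ {S Q : Sys}, Reach S Q → ∀ C P, S = .par (.atom C l) P →
      ∃ C' P', Q = .par (.atom C' l) P' ∧ OReach C C' := by
  intro S Q h
  induction h with
  | refl R => exact fun C P hS => ⟨C, P, hS, OReach.refl C⟩
  | step hs _ ih =>
      rintro C P rfl
      rcases hs with hτ | ⟨a', r, s, hc⟩
      · cases hτ with
        | parL h1 hn =>
            cases h1 with
            | atomTau h2 =>
                obtain ⟨C', P', rfl, hre⟩ := ih _ _ rfl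
                exact ⟨C', P', rfl, OReach.step h2 hre⟩
        | parR h1 hn =>
            obtain ⟨C', P', rfl, hre⟩ := ih _ _ rfl
            exact ⟨C', P', rfl, hre⟩
      · cases hc with
        | parL h1 hn => cases h1
        | parR h1 hn =>
            obtain ⟨C', P', rfl, hre⟩ := ih _ _ rfl
            exact ⟨C', P', rfl, hre⟩
        | commLR h1 h2 =>
            cases h1 with
            | atomOut h3 =>
                obtain ⟨C', P', rfl, hre⟩ := ih _ _ rfl
                exact ⟨C', P', rfl, OReach.step h3 hre⟩
        | commRL h1 h2 =>
            cases h1 with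
            | atomInp h3 =>
                obtain ⟨C', P', rfl, hre⟩ := ih _ _ rfl
                exact ⟨C', P', rfl, OReach.step h3 hre⟩

lemma not_correct_of_dead {C : Orc} (hC : Dead C) (l : Role) (P : Sys) :
    ¬ Correct (.par (.atom C l) P) := by
  intro h
  obtain ⟨P'', hre, hct⟩ := h _ (Reach.refl _)
  obtain ⟨C', P', rfl, hor⟩ := reach_par_inv hre C P rfl
  obtain ⟨Q, hQ⟩ := hct
  cases hQ with
  | parL _ hn => exact hn rfl
  | parR _ hn => exact hn rfl
  | parTick h1 h2 =>
      cases h1 with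
      | atomTick h3 => exact hC C' hor ⟨_, h3⟩

lemma subcontract_of_dead {C C' : Orc} (hC : Dead C) : Subcontract C' C := by
  intro l _ P _ _ _ h
  exact absurd h (not_correct_of_dead hC l P)

/-- The discriminating test: success only after synchronising on input `a`. -/
def myTest (a : AName) : TestLTS where
  S := Bool
  init := false
  step := fun s lab s' =>
    (s = false ∧ lab = .sync (.inp a) ∧ s' = true) ∨
    (s = true ∧ lab = .succ ∧ s' = true)

lemma tc_inv {a b : AName} {c c' : Orc × (myTest a).S}
    (h : TCStep (myTest a) c c')
    (hc : c = (inSeq0 a b, false) ∨ c.2 = true) :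
    c' = (inSeq0 a b, false) ∨ c'.2 = true := by
  cases h with
  | ctau h1 =>
      rcases hc with hc | hc
      · exfalso
        injection hc with h2 h3
        subst h2
        cases h1 with
        | seqL h4 hn => cases h4
        | seqTick h4 h5 => cases h4
      · exact Or.inr hc
  | ttau h1 =>
      rcases h1 with ⟨_, h2, _⟩ | ⟨_, h2, _⟩ <;> cases h2
  | sync h1 hn h2 =>
      rcases h2 with ⟨_, _, h3⟩ | ⟨_, h3, _⟩
      · exact Or.inr h3
      · cases h3

lemma shd_inSeq0 (a b : AName) : Shd (inSeq0 a b) (myTest a) := by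
  intro c hreach
  have hc : c = (inSeq0 a b, false) ∨ c.2 = true :=
    tcreach_ind (T := myTest a)
      (P := fun x => x = (inSeq0 a b, false) ∨ x.2 = true)
      (fun hs h => tc_inv hs h) hreach (Or.inl rfl)
  rcases hc with rfl | hc
  · refine ⟨(.seq .one (.seq (.inp b) .zero), true), ?_, true, Or.inr ⟨rfl, rfl, rfl⟩⟩
    refine TCReach.step ?_ (TCReach.refl _)
    exact TCStep.sync (OStep.seqL OStep.inp (by simp)) (by simp)
      (Or.inl ⟨rfl, rfl, rfl⟩)
  · exact ⟨c, TCReach.refl _, true, Or.inr ⟨hc, rfl, rfl⟩⟩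

lemma not_shd_zero (a : AName) : ¬ Shd .zero (myTest a) := by
  intro h
  obtain ⟨c', hre, t', hsucc⟩ := h (.zero, false) (TCReach.refl _)
  have hc' : c' = ((.zero : Orc), false) := by
    refine tcreach_ind (T := myTest a)
      (P := fun (x : Orc × (myTest a).S) => x = ((.zero : Orc), false)) ?_ hre rfl
    intro (x : Orc × (myTest a).S) (y : Orc × (myTest a).S) hs hx
    exfalso
    cases hs with
    | ctau h1 => cases hx; cases h1
    | ttau h1 => cases hx; rcases h1 with ⟨_, h2, _⟩ | ⟨h2, _, _⟩ <;> cases h2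
    | sync h1 _ _ => cases hx; cases h1
  subst hc'
  rcases hsucc with ⟨_, h2, _⟩ | ⟨h2, _, _⟩ <;> cases h2

lemma not_shouldpre (a b : AName) : ¬ ShouldPre .zero (inSeq0 a b) := by
  intro h
  exact not_shd_zero a (h (myTest a) (shd_inSeq0 a b))

/-- The converse of the soundness theorem for the
should-testing characterization fails: there are output persistent contracts
`C`, `C'` with `C' ⪯ C` but not `NF(C' \\ (I(C') − I(C))) ⪯_test NF(C)`.
In particular `a;b;0 ⪯ 0` and `0 ⪯ a;b;0`, yet
`NF(0 \\ (I(0) − I(a;b;0))) ⪯_test NF(a;b;0)` fails; hence `⪯` is strictly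
coarser than should-testing. -/
theorem should_testing_converse_fails (a b : AName) :
    (∃ C C' : Orc, OutputPersistent C ∧ OutputPersistent C' ∧
      Subcontract C' C ∧
      ¬ ShouldPre (NF (restrict C' (inames C' \ inames C))) (NF C)) ∧
    Subcontract (inSeq0 a b) .zero ∧
    Subcontract .zero (inSeq0 a b) ∧
    ¬ ShouldPre (NF (restrict .zero (inames .zero \ inames (inSeq0 a b))))
        (NF (inSeq0 a b)) := by
  have hopz : OutputPersistent (.zero : Orc) := op_of_noout rfl
  have hopi : OutputPersistent (inSeq0 a b) := op_of_noout (by simp [inSeq0, oroles])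
  refine ⟨⟨inSeq0 a b, .zero, hopi, hopz, subcontract_of_dead (dead_inSeq0 a b), ?_⟩,
    subcontract_of_dead dead_zero, subcontract_of_dead (dead_inSeq0 a b), ?_⟩ <;>
  exact not_shouldpre a b
end

section
/- Trace inclusion is not coarser than the subcontract relation: there exist output persistent contracts C and C' with C' ⪯ C such that some sequence of visible actions performable by C' is not performable by C (e.g. C = 0 and C' = a;b;0 satisfy a;b;0 ⪯ 0, yet a;b;0 has the trace ab which 0 does not have). -/

theorem ostep_oroles_subset {C C' : Orc} {μ : OLabel} (h : OStep C μ C') :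
    oroles C' ⊆ oroles C := by
  induction h with
  | one => simp [oroles]
  | tau => simp [oroles]
  | inp => simp [oroles]
  | out => simp [oroles]
  | choiceL _ ih => exact ih.trans (by simp [oroles])
  | choiceR _ ih => exact ih.trans (by simp [oroles])
  | seqL _ _ ih =>
      simp only [oroles]
      exact Finset.union_subset_union ih (le_refl _)
  | seqTick _ _ _ ih => exact ih.trans (by simp [oroles])
  | parL _ _ ih =>
      simp only [oroles]
      exact Finset.union_subset_union ih (le_refl _)
  | parR _ _ ih =>
      simp only [oroles]
      exact Finset.union_subset_union (le_refl _) ih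
  | parTick _ _ ih₁ ih₂ =>
      simp only [oroles]
      exact Finset.union_subset_union ih₁ ih₂
  | starTick => simp [oroles]
  | starStep _ _ ih =>
      simp only [oroles]
      exact Finset.union_subset (ih.trans (by simp [oroles])) (by simp [oroles])

theorem ostep_out_mem {C C' : Orc} {a : AName} {l : Role}
    (h : OStep C (.out a l) C') : l ∈ oroles C := by
  generalize hμ : OLabel.out a l = μ at h
  induction h with
  | one => cases hμ
  | tau => cases hμ
  | inp => cases hμ
  | out => cases hμ; simp [oroles]
  | choiceL _ ih => simp [oroles]; exact Or.inl (ih hμ)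
  | choiceR _ ih => simp [oroles]; exact Or.inr (ih hμ)
  | seqL _ _ ih => simp [oroles]; exact Or.inl (ih hμ)
  | seqTick _ _ _ ih => simp [oroles]; exact Or.inr (ih hμ)
  | parL _ _ ih => simp [oroles]; exact Or.inl (ih hμ)
  | parR _ _ ih => simp [oroles]; exact Or.inr (ih hμ)
  | parTick => cases hμ
  | starTick => cases hμ
  | starStep _ _ ih => simp [oroles]; exact ih hμ

theorem oreach_oroles_subset {C C' : Orc} (h : OReach C C') :
    oroles C' ⊆ oroles C := by
  induction h with
  | refl => exact Finset.Subset.refl _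
  | step hs _ ih => exact ih.trans (ostep_oroles_subset hs)

theorem op_of_no_oroles {C : Orc} (h : oroles C = ∅) : OutputPersistent C := by
  intro C' hr a l hout
  exfalso
  obtain ⟨D, hD⟩ := hout
  have := oreach_oroles_subset hr (ostep_out_mem hD)
  rw [h] at this
  exact absurd this (Finset.notMem_empty l)

theorem zero_no_ostep {μ : OLabel} {C : Orc} : ¬ OStep .zero μ C := by
  intro h; cases h

theorem atom_zero_no_sstep {l : Role} {μ : SLabel} {X : Sys} :
    ¬ SStep (.atom .zero l) μ X := by
  intro h
  cases h with
  | atomTau h => exact zero_no_ostep h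
  | atomInp h => exact zero_no_ostep h
  | atomOut h => exact zero_no_ostep h
  | atomTick h => exact zero_no_ostep h

theorem reach_par_zero {l : Role} {P X : Sys}
    (h : Reach (.par (.atom .zero l) P) X) : ∃ Q, X = .par (.atom .zero l) Q := by
  generalize hS : Sys.par (.atom .zero l) P = S at h
  induction h generalizing P with
  | refl => exact ⟨P, hS.symm⟩
  | @step S S' S'' hcs _ ih =>
      subst hS
      have : ∃ Q, S' = .par (.atom .zero l) Q := by
        rcases hcs with h | ⟨a, r, s, h⟩
        · cases h with
          | parL h _ => exact absurd h atom_zero_no_sstep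
          | parR h _ => exact ⟨_, rfl⟩
        · cases h with
          | parL h _ => exact absurd h atom_zero_no_sstep
          | parR h _ => exact ⟨_, rfl⟩
          | commLR h _ => exact absurd h atom_zero_no_sstep
          | commRL h _ => exact absurd h atom_zero_no_sstep
      obtain ⟨Q, rfl⟩ := this
      exact ih rfl

theorem not_correct_par_zero {l : Role} {P : Sys} :
    ¬ Correct (.par (.atom .zero l) P) := by
  intro h
  obtain ⟨P'', hr, P''', ht⟩ := h _ (Reach.refl _)
  obtain ⟨Q, rfl⟩ := reach_par_zero hr
  cases ht with
  | parTick h _ => exact absurd h atom_zero_no_sstep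
  | parL _ h => exact h rfl
  | parR _ h => exact h rfl

theorem subcontract_inSeq0_zero (a b : AName) : Subcontract (inSeq0 a b) .zero := by
  intro l _ P _ _ _ hc
  exact absurd hc not_correct_par_zero

theorem wotrace_inSeq0 (a b : AName) : WOTrace (inSeq0 a b) [.inp a, .inp b] := by
  refine WOTrace.vis (OStep.seqL OStep.inp (by simp)) (by simp) ?_
  refine WOTrace.vis (OStep.seqTick OStep.one (OStep.seqL OStep.inp (by simp)))
    (by simp) ?_
  exact WOTrace.nil _

theorem not_wotrace_zero (a b : AName) : ¬ WOTrace .zero [.inp a, .inp b] := by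
  intro h
  generalize hw : [OLabel.inp a, OLabel.inp b] = w at h
  generalize hC : Orc.zero = C at h
  induction h with
  | nil => simp at hw
  | tau h _ _ => subst hC; exact zero_no_ostep h
  | vis h _ _ _ => subst hC; exact zero_no_ostep h

/-- Trace inclusion is not coarser than the subcontract
relation: there are output persistent contracts `C`, `C'` with `C' ⪯ C` such
that some sequence of visible actions of `C'` is not a trace of `C`; e.g.
`a;b;0 ⪯ 0`, yet `a;b;0` has the trace `ab`, which `0` does not have. -/
theorem trace_inclusion_not_coarser (a b : AName) :
    (∃ C C' : Orc, OutputPersistent C ∧ OutputPersistent C' ∧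
      Subcontract C' C ∧ ∃ w, WOTrace C' w ∧ ¬ WOTrace C w) ∧
    Subcontract (inSeq0 a b) .zero ∧
    WOTrace (inSeq0 a b) [.inp a, .inp b] ∧
    ¬ WOTrace .zero [.inp a, .inp b] := by
  refine ⟨⟨.zero, inSeq0 a b, op_of_no_oroles rfl, op_of_no_oroles (by simp [inSeq0, oroles]),
      subcontract_inSeq0_zero a b, [.inp a, .inp b], wotrace_inSeq0 a b, not_wotrace_zero a b⟩,
    subcontract_inSeq0_zero a b, wotrace_inSeq0 a b, not_wotrace_zero a b⟩
end

section
/- The choreography H = a_{r→s} ; b_{t→u} (with r, s, t, u pairwise distinct roles) is not well formed: the system obtained by projection, [ā_s]_r || [a]_s || [b̄_u]_t || [b]_u, is a correct composition, but it does not implement H, since it admits the conversation b_{t→u} a_{r→s} which is not a trace of H. -/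
/-! ### Auxiliary inversion lemmas -/

section Aux

lemma ostep_one_inv {μ C'} (h : OStep .one μ C') : μ = .tick ∧ C' = .zero := by
  cases h; exact ⟨rfl, rfl⟩

lemma sstep_out_inv {a l r μ P'} (h : SStep (.atom (.out a l) r) μ P') :
    μ = .out a r l ∧ P' = .atom .one r := by
  cases h with
  | atomTau h => cases h
  | atomInp h => cases h
  | atomOut h => cases h; exact ⟨rfl, rfl⟩
  | atomTick h => cases h

lemma sstep_inp_inv {a r μ P'} (h : SStep (.atom (.inp a) r) μ P') :
    μ = .inp a r ∧ P' = .atom .one r := by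
  cases h with
  | atomTau h => cases h
  | atomInp h => cases h; exact ⟨rfl, rfl⟩
  | atomOut h => cases h
  | atomTick h => cases h

lemma sstep_one_inv {r μ P'} (h : SStep (.atom .one r) μ P') :
    μ = .tick ∧ P' = .atom .zero r := by
  cases h with
  | atomTau h => cases h
  | atomInp h => cases h
  | atomOut h => cases h
  | atomTick h => cases h; exact ⟨rfl, rfl⟩

variable (a b : AName) (r s t u : Role)

/-- Abbreviations for the pair subsystem `[b̄_u]_t || [b]_u` and its states. -/
private def CD0 : Sys := .par (.atom (.out b u) t) (.atom (.inp b) u)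
private def CD1 : Sys := .par (.atom .one t) (.atom .one u)

lemma cd0_inv {μ P'} (h : SStep (CD0 b t u) μ P') :
    (μ = .out b t u ∧ P' = .par (.atom .one t) (.atom (.inp b) u)) ∨
    (μ = .inp b u ∧ P' = .par (.atom (.out b u) t) (.atom .one u)) ∨
    (μ = .comm b t u ∧ P' = CD1 t u) := by
  cases h with
  | parL h hne => obtain ⟨h1, h2⟩ := sstep_out_inv h; subst h1 h2; exact .inl ⟨rfl, rfl⟩
  | parR h hne => obtain ⟨h1, h2⟩ := sstep_inp_inv h; subst h1 h2; exact .inr (.inl ⟨rfl, rfl⟩)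
  | commLR h1 h2 =>
      obtain ⟨e1, e2⟩ := sstep_out_inv h1
      obtain ⟨f1, f2⟩ := sstep_inp_inv h2
      cases e1; cases f1; subst e2 f2; exact .inr (.inr ⟨rfl, rfl⟩)
  | commRL h1 h2 => exact absurd (sstep_out_inv h1).1 (by simp)
  | parTick h1 h2 => exact absurd (sstep_out_inv h1).1 (by simp)

lemma cd1_inv {μ P'} (h : SStep (CD1 t u) μ P') :
    μ = .tick ∧ P' = .par (.atom .zero t) (.atom .zero u) := by
  cases h with
  | parL h hne => exact absurd (sstep_one_inv h).1 hne
  | parR h hne => exact absurd (sstep_one_inv h).1 hne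
  | commLR h1 h2 => exact absurd (sstep_one_inv h1).1 (by simp)
  | commRL h1 h2 => exact absurd (sstep_one_inv h1).1 (by simp)
  | parTick h1 h2 =>
      obtain ⟨e1, e2⟩ := sstep_one_inv h1
      obtain ⟨f1, f2⟩ := sstep_one_inv h2
      subst e2 f2; exact ⟨rfl, rfl⟩

/-- States of the triple subsystem `[a]_s || [b̄_u]_t || [b]_u`. -/
private def T0 : Sys := .par (.atom (.inp a) s) (CD0 b t u)
private def T1 : Sys := .par (.atom (.inp a) s) (CD1 t u)
private def T0' : Sys := .par (.atom .one s) (CD0 b t u)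
private def T1' : Sys := .par (.atom .one s) (CD1 t u)

lemma t0_inv (hab : a ≠ b) {μ P'} (h : SStep (T0 a b s t u) μ P') :
    (μ = .inp a s ∧ P' = T0' b s t u) ∨
    (μ = .out b t u ∧ P' = .par (.atom (.inp a) s) (.par (.atom .one t) (.atom (.inp b) u))) ∨
    (μ = .inp b u ∧ P' = .par (.atom (.inp a) s) (.par (.atom (.out b u) t) (.atom .one u))) ∨
    (μ = .comm b t u ∧ P' = T1 a s t u) := by
  cases h with
  | parL h hne =>
      obtain ⟨h1, h2⟩ := sstep_inp_inv h; subst h1 h2; exact .inl ⟨rfl, rfl⟩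
  | parR h hne =>
      rcases cd0_inv b t u h with ⟨h1, h2⟩ | ⟨h1, h2⟩ | ⟨h1, h2⟩ <;> subst h1 h2
      · exact .inr (.inl ⟨rfl, rfl⟩)
      · exact .inr (.inr (.inl ⟨rfl, rfl⟩))
      · exact .inr (.inr (.inr ⟨rfl, rfl⟩))
  | commLR h1 h2 => exact absurd (sstep_inp_inv h1).1 (by simp)
  | commRL h1 h2 =>
      obtain ⟨e1, e2⟩ := sstep_inp_inv h1
      rcases cd0_inv b t u h2 with ⟨h1, _⟩ | ⟨h1, _⟩ | ⟨h1, _⟩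
      · injection e1 with ea es
        injection h1 with eb
        exact absurd (ea.symm.trans eb) hab
      · exact absurd h1 (by simp)
      · exact absurd h1 (by simp)
  | parTick h1 h2 => exact absurd (sstep_inp_inv h1).1 (by simp)

lemma t1_inv {μ P'} (h : SStep (T1 a s t u) μ P') :
    μ = .inp a s ∧ P' = T1' s t u := by
  cases h with
  | parL h hne =>
      obtain ⟨h1, h2⟩ := sstep_inp_inv h; subst h1 h2; exact ⟨rfl, rfl⟩
  | parR h hne => exact absurd (cd1_inv t u h).1 hne
  | commLR h1 h2 => exact absurd (sstep_inp_inv h1).1 (by simp)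
  | commRL h1 h2 => exact absurd (cd1_inv t u h2).1 (by simp)
  | parTick h1 h2 => exact absurd (sstep_inp_inv h1).1 (by simp)

lemma t0'_inv {μ P'} (h : SStep (T0' b s t u) μ P') :
    (μ = .out b t u ∧ P' = .par (.atom .one s) (.par (.atom .one t) (.atom (.inp b) u))) ∨
    (μ = .inp b u ∧ P' = .par (.atom .one s) (.par (.atom (.out b u) t) (.atom .one u))) ∨
    (μ = .comm b t u ∧ P' = T1' s t u) := by
  cases h with
  | parL h hne => exact absurd (sstep_one_inv h).1 hne
  | parR h hne =>
      rcases cd0_inv b t u h with ⟨h1, h2⟩ | ⟨h1, h2⟩ | ⟨h1, h2⟩ <;> subst h1 h2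
      · exact .inl ⟨rfl, rfl⟩
      · exact .inr (.inl ⟨rfl, rfl⟩)
      · exact .inr (.inr ⟨rfl, rfl⟩)
  | commLR h1 h2 => exact absurd (sstep_one_inv h1).1 (by simp)
  | commRL h1 h2 => exact absurd (sstep_one_inv h1).1 (by simp)
  | parTick h1 h2 =>
      rcases cd0_inv b t u h2 with ⟨h1, _⟩ | ⟨h1, _⟩ | ⟨h1, _⟩ <;> exact absurd h1 (by simp)

lemma t1'_inv {μ P'} (h : SStep (T1' s t u) μ P') :
    μ = .tick ∧ P' = .par (.atom .zero s) (.par (.atom .zero t) (.atom .zero u)) := by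
  cases h with
  | parL h hne => exact absurd (sstep_one_inv h).1 hne
  | parR h hne => exact absurd (cd1_inv t u h).1 hne
  | commLR h1 h2 => exact absurd (sstep_one_inv h1).1 (by simp)
  | commRL h1 h2 => exact absurd (cd1_inv t u h2).1 (by simp)
  | parTick h1 h2 =>
      obtain ⟨e1, e2⟩ := sstep_one_inv h1
      obtain ⟨f1, f2⟩ := cd1_inv t u h2
      subst e2 f2; exact ⟨rfl, rfl⟩

end Aux

/-- The four global states of the system. -/
private def S00 (a b : AName) (r s t u : Role) : Sys :=
  .par (.atom (.out a s) r) (T0 a b s t u)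
private def S10 (b : AName) (r s t u : Role) : Sys :=
  .par (.atom .one r) (T0' b s t u)
private def S01 (a b : AName) (r s t u : Role) : Sys :=
  .par (.atom (.out a s) r) (T1 a s t u)
private def S11 (r s t u : Role) : Sys :=
  .par (.atom .one r) (T1' s t u)

lemma s11_canTick (r s t u : Role) : CanTick (S11 r s t u) :=
  ⟨_, .parTick (.atomTick .one)
      (.parTick (.atomTick .one) (.parTick (.atomTick .one) (.atomTick .one)))⟩

lemma step_a00 (a b : AName) (r s t u : Role) :
    SStep (S00 a b r s t u) (.comm a r s) (S10 b r s t u) :=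
  .commLR (.atomOut .out) (.parL (.atomInp .inp) (by simp))

lemma step_b00 (a b : AName) (r s t u : Role) :
    SStep (S00 a b r s t u) (.comm b t u) (S01 a b r s t u) :=
  .parR (.parR (.commLR (.atomOut .out) (.atomInp .inp)) (by simp)) (by simp)

lemma step_b10 (a b : AName) (r s t u : Role) :
    SStep (S10 b r s t u) (.comm b t u) (S11 r s t u) :=
  .parR (.parR (.commLR (.atomOut .out) (.atomInp .inp)) (by simp)) (by simp)

lemma step_a01 (a b : AName) (r s t u : Role) :
    SStep (S01 a b r s t u) (.comm a r s) (S11 r s t u) :=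
  .commLR (.atomOut .out) (.parL (.atomInp .inp) (by simp))

lemma cstep00 (a b : AName) (r s t u : Role) (hab : a ≠ b) {Q}
    (h : CompleteStep (S00 a b r s t u) Q) :
    Q = S10 b r s t u ∨ Q = S01 a b r s t u := by
  rcases h with h | ⟨a', r', s', h⟩
  · cases h with
    | parL h hne => exact absurd (sstep_out_inv h).1 (by simp)
    | parR h hne =>
        rcases t0_inv a b s t u hab h with ⟨h1, _⟩ | ⟨h1, _⟩ | ⟨h1, _⟩ | ⟨h1, _⟩ <;>
          exact absurd h1 (by simp)
  · cases h with
    | parL h hne => exact absurd (sstep_out_inv h).1 (by simp)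
    | parR h hne =>
        rcases t0_inv a b s t u hab h with ⟨h1, h2⟩ | ⟨h1, h2⟩ | ⟨h1, h2⟩ | ⟨h1, h2⟩
        · exact absurd h1 (by simp)
        · exact absurd h1 (by simp)
        · exact absurd h1 (by simp)
        · subst h2; exact .inr rfl
    | commLR h1 h2 =>
        obtain ⟨e1, e2⟩ := sstep_out_inv h1
        cases e1
        rcases t0_inv a b s t u hab h2 with ⟨f1, f2⟩ | ⟨f1, f2⟩ | ⟨f1, f2⟩ | ⟨f1, f2⟩
        · subst e2 f2; exact .inl rfl
        · exact absurd f1 (by simp)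
        · injection f1 with eb; exact absurd eb hab
        · exact absurd f1 (by simp)
    | commRL h1 h2 => exact absurd (sstep_out_inv h1).1 (by simp)

lemma cstep10 (a b : AName) (r s t u : Role) (hab : a ≠ b) {Q}
    (h : CompleteStep (S10 b r s t u) Q) :
    Q = S11 r s t u := by
  rcases h with h | ⟨a', r', s', h⟩
  · cases h with
    | parL h hne => exact absurd (sstep_one_inv h).1 (by simp)
    | parR h hne =>
        rcases t0'_inv b s t u h with ⟨h1, _⟩ | ⟨h1, _⟩ | ⟨h1, _⟩ <;> exact absurd h1 (by simp)
  · cases h with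
    | parL h hne => exact absurd (sstep_one_inv h).1 (by simp)
    | parR h hne =>
        rcases t0'_inv b s t u h with ⟨h1, h2⟩ | ⟨h1, h2⟩ | ⟨h1, h2⟩
        · exact absurd h1 (by simp)
        · exact absurd h1 (by simp)
        · subst h2; rfl
    | commLR h1 h2 => exact absurd (sstep_one_inv h1).1 (by simp)
    | commRL h1 h2 => exact absurd (sstep_one_inv h1).1 (by simp)

lemma cstep01 (a b : AName) (r s t u : Role) {Q}
    (h : CompleteStep (S01 a b r s t u) Q) :
    Q = S11 r s t u := by
  rcases h with h | ⟨a', r', s', h⟩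
  · cases h with
    | parL h hne => exact absurd (sstep_out_inv h).1 (by simp)
    | parR h hne => exact absurd (t1_inv a s t u h).1 (by simp)
  · cases h with
    | parL h hne => exact absurd (sstep_out_inv h).1 (by simp)
    | parR h hne => exact absurd (t1_inv a s t u h).1 (by simp)
    | commLR h1 h2 =>
        obtain ⟨e1, e2⟩ := sstep_out_inv h1
        cases e1
        obtain ⟨f1, f2⟩ := t1_inv a s t u h2
        subst e2 f2; rfl
    | commRL h1 h2 => exact absurd (sstep_out_inv h1).1 (by simp)

lemma cstep11 (r s t u : Role) {Q} (h : CompleteStep (S11 r s t u) Q) : False := by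
  rcases h with h | ⟨a', r', s', h⟩
  · cases h with
    | parL h hne => exact absurd (sstep_one_inv h).1 (by simp)
    | parR h hne => exact absurd (t1'_inv s t u h).1 (by simp)
  · cases h with
    | parL h hne => exact absurd (sstep_one_inv h).1 (by simp)
    | parR h hne => exact absurd (t1'_inv s t u h).1 (by simp)
    | commLR h1 h2 => exact absurd (sstep_one_inv h1).1 (by simp)
    | commRL h1 h2 => exact absurd (sstep_one_inv h1).1 (by simp)

lemma correct_raw (a b : AName) (r s t u : Role) (hab : a ≠ b) :
    Correct (S00 a b r s t u) := by
  have hreach : ∀ P', Reach (S00 a b r s t u) P' →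
      P' = S00 a b r s t u ∨ P' = S10 b r s t u ∨
      P' = S01 a b r s t u ∨ P' = S11 r s t u := by
    have key : ∀ X P', Reach X P' →
        (X = S00 a b r s t u ∨ X = S10 b r s t u ∨
         X = S01 a b r s t u ∨ X = S11 r s t u) →
        P' = S00 a b r s t u ∨ P' = S10 b r s t u ∨
        P' = S01 a b r s t u ∨ P' = S11 r s t u := by
      intro X P' h
      induction h with
      | refl => exact id
      | step hs _ ih =>
          intro hc
          apply ih
          rcases hc with rfl | rfl | rfl | rfl
          · rcases cstep00 a b r s t u hab hs with rfl | rfl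
            · exact .inr (.inl rfl)
            · exact .inr (.inr (.inl rfl))
          · exact .inr (.inr (.inr (cstep10 a b r s t u hab hs)))
          · exact .inr (.inr (.inr (cstep01 a b r s t u hs)))
          · exact absurd hs (cstep11 r s t u)
    exact fun P' h => key _ _ h (.inl rfl)
  intro P' h
  refine ⟨S11 r s t u, ?_, s11_canTick r s t u⟩
  rcases hreach P' h with rfl | rfl | rfl | rfl
  · exact .step (.inr ⟨a, r, s, step_a00 a b r s t u⟩)
      (.step (.inr ⟨b, t, u, step_b10 a b r s t u⟩) (.refl _))
  · exact .step (.inr ⟨b, t, u, step_b10 a b r s t u⟩) (.refl _)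
  · exact .step (.inr ⟨a, r, s, step_a01 a b r s t u⟩) (.refl _)
  · exact .refl _

lemma wtrace_raw (a b : AName) (r s t u : Role) :
    WTrace (S00 a b r s t u) [(b, t, u), (a, r, s)] :=
  .comm (step_b00 a b r s t u) (.comm (step_a01 a b r s t u) (.tick (s11_canTick r s t u)))

lemma not_ctrace (a b : AName) (r s t u : Role) (hab : a ≠ b) :
    ¬ CTrace (.seq (.comm a r s) (.comm b t u)) [(b, t, u), (a, r, s)] := by
  intro h
  cases h with
  | comm h _ =>
      cases h with
      | seqL h hne => cases h; exact hab rfl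
      | seqTick h _ => cases h


/-- The choreography `H = a_{r→s} ; b_{t→u}` (with `r`, `s`,
`t`, `u` pairwise distinct) is not well formed: the projected system
`[ā_s]_r || [a]_s || [b̄_u]_t || [b]_u` is a correct composition but does not
implement `H`, since it admits the conversation `b_{t→u} a_{r→s}` which is not
a trace of `H`. -/
theorem seq_choreography_not_well_formed
    (a b : AName) (r s t u : Role) (hab : a ≠ b)
    (hroles : ([r, s, t, u] : List Role).Nodup) :
    Correct (.par (.atom (.out a s) r) (.par (.atom (.inp a) s)
      (.par (.atom (.out b u) t) (.atom (.inp b) u)))) ∧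
    ¬ Implements (.par (.atom (.out a s) r) (.par (.atom (.inp a) s)
      (.par (.atom (.out b u) t) (.atom (.inp b) u))))
      (.seq (.comm a r s) (.comm b t u)) ∧
    WTrace (.par (.atom (.out a s) r) (.par (.atom (.inp a) s)
      (.par (.atom (.out b u) t) (.atom (.inp b) u)))) [(b, t, u), (a, r, s)] ∧
    ¬ CTrace (.seq (.comm a r s) (.comm b t u)) [(b, t, u), (a, r, s)] ∧
    ¬ WellFormed (.seq (.comm a r s) (.comm b t u)) := by
  have hd := hroles
  simp only [List.nodup_cons, List.mem_cons, List.mem_singleton, List.not_mem_nil,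
    or_false, not_or, List.nodup_nil, and_true] at hd
  obtain ⟨⟨hrs, hrt, hru⟩, ⟨hst, hsu⟩, htu, -⟩ := hd
  refine ⟨correct_raw a b r s t u hab, ?_, wtrace_raw a b r s t u,
    not_ctrace a b r s t u hab, ?_⟩
  · rintro ⟨-, h⟩
    exact not_ctrace a b r s t u hab (h _ (wtrace_raw a b r s t u))
  · intro hwf
    have hfin : ([r, s, t, u] : List Role).toFinset
        = rolesC (.seq (.comm a r s) (.comm b t u)) := by
      ext x; simp [rolesC]; tauto
    have h := hwf [r, s, t, u] hroles hfin
    have hproj : (([r, s, t, u].map fun v => (proj (.seq (.comm a r s) (.comm b t u)) v, v))) =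
        [(.seq (.out a s) .one, r), (.seq (.inp a) .one, s),
         (.seq .one (.out b u), t), (.seq .one (.inp b), u)] := by
      simp [proj, hrs, hrt, hru, hst, hsu, htu, Ne.symm hrs, Ne.symm hst, Ne.symm hrt, Ne.symm hru, Ne.symm hsu, Ne.symm htu]
    rw [hproj] at h
    have hw : WTrace (composeC
        [(.seq (.out a s) .one, r), (.seq (.inp a) .one, s),
         (.seq .one (.out b u), t), (.seq .one (.inp b), u)]) [(b, t, u), (a, r, s)] := by
      show WTrace (.par (.atom (.seq (.out a s) .one) r) (.par (.atom (.seq (.inp a) .one) s)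
        (.par (.atom (.seq .one (.out b u)) t) (.atom (.seq .one (.inp b)) u)))) _
      refine .comm (.parR (.parR (.commLR (.atomOut (.seqTick .one .out))
        (.atomInp (.seqTick .one .inp))) (by simp)) (by simp)) ?_
      refine .comm (.commLR (.atomOut (.seqL .out (by simp)))
        (.parL (.atomInp (.seqL .inp (by simp))) (by simp))) ?_
      exact .tick ⟨_, .parTick (.atomTick (.seqTick .one .one))
        (.parTick (.atomTick (.seqTick .one .one))
          (.parTick (.atomTick .one) (.atomTick .one)))⟩
    exact not_ctrace a b r s t u hab (h.2 _ hw)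
end
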